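/- Let G be a countable group and H ≤ G a subgroup. If the left multiplication action of G on G/H is sofic, then there exists a normal subgroup N of G with N ≤ H such that G/N is a sofic group. -/

import Mathlib

open scoped Classical Pointwise

noncomputable def hDist {A : Type*} [Fintype A] (σ τ : Equiv.Perm A) : ℝ :=
  ((Finset.univ.filter fun a => σ a ≠ τ a).card : ℝ) / (Fintype.card A : ℝ)

/-- `φ : G → Sym(Fin n)` is an `(F, E, ε)`-orbit approximation of the action `α : G ↷ X`. -/
def IsOrbitApprox {G X : Type*} [Group G] {n : ℕ} (α : G →* Equiv.Perm X)
    (F : Finset G) (E : Finset X) (ε : ℝ) (φ : G → Equiv.Perm (Fin n)) : Prop :=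
  ∃ (m : ℕ) (S : Finset (Fin n)) (π : Fin n → X → Fin m),
    ((S.card : ℝ) > (1 - ε) * (n : ℝ)) ∧
    (∀ s ∈ S, Set.InjOn (π s) (E : Set X)) ∧
    (∀ s ∈ S, ∀ g ∈ F, ∀ x ∈ E, φ g s ∈ S → α g⁻¹ x ∈ E →
      π (φ g s) x = π s (α g⁻¹ x))

/-- Soficity of an action `α : G ↷ X` given as a homomorphism `G →* Sym(X)`. -/
def SoficAction {G X : Type*} [Group G] (α : G →* Equiv.Perm X) : Prop :=
  ∀ (F : Finset G) (E : Finset X) (ε : ℝ), 0 < ε →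
    ∃ (n : ℕ) (φ : G → Equiv.Perm (Fin n)),
      φ 1 = 1 ∧
      (∀ g ∈ F, ∀ h ∈ F, hDist (φ (g * h)) (φ g * φ h) < ε) ∧
      IsOrbitApprox α F E ε φ

/-- Soficity of a group. -/
def SoficGroup (G : Type*) [Group G] : Prop :=
  ∀ (F : Finset G) (ε : ℝ), 0 < ε →
    ∃ (n : ℕ) (φ : G → Equiv.Perm (Fin n)),
      φ 1 = 1 ∧
      (∀ g ∈ F, ∀ h ∈ F, hDist (φ (g * h)) (φ g * φ h) < ε) ∧
      (∀ g ∈ F, g ≠ 1 → hDist 1 (φ g) > 1 - ε)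


namespace SoficAux

variable {A B : Type*} [Fintype A] [Fintype B]

lemma hDist_nonneg (σ τ : Equiv.Perm A) : 0 ≤ hDist σ τ :=
  div_nonneg (Nat.cast_nonneg _) (Nat.cast_nonneg _)

lemma hDist_self (σ : Equiv.Perm A) : hDist σ σ = 0 := by
  simp [hDist]

lemma hDist_comm (σ τ : Equiv.Perm A) : hDist σ τ = hDist τ σ := by
  unfold hDist
  congr 2
  refine congrArg Finset.card ?_
  apply Finset.filter_congr
  intro a _
  simp [ne_comm]

lemma hDist_triangle (σ τ ρ : Equiv.Perm A) : hDist σ ρ ≤ hDist σ τ + hDist τ ρ := by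
  unfold hDist
  rw [← add_div]
  have hsub : (Finset.univ.filter fun a => σ a ≠ ρ a)
      ⊆ (Finset.univ.filter fun a => σ a ≠ τ a) ∪ (Finset.univ.filter fun a => τ a ≠ ρ a) := by
    intro a ha
    simp only [Finset.mem_filter, Finset.mem_univ, true_and, Finset.mem_union] at ha ⊢
    by_contra hc
    push_neg at hc
    exact ha (hc.1.trans hc.2)
  have hcard : ((Finset.univ.filter fun a => σ a ≠ ρ a).card : ℝ)
      ≤ ((Finset.univ.filter fun a => σ a ≠ τ a).card : ℝ)
        + ((Finset.univ.filter fun a => τ a ≠ ρ a).card : ℝ) := by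
    have := le_trans (Finset.card_le_card hsub) (Finset.card_union_le _ _)
    exact_mod_cast this
  rcases Nat.eq_zero_or_pos (Fintype.card A) with h0 | hpos
  · simp [h0]
  · exact (div_le_div_iff_of_pos_right (by exact_mod_cast hpos)).mpr hcard

lemma hDist_mul_left (ρ σ τ : Equiv.Perm A) : hDist (ρ * σ) (ρ * τ) = hDist σ τ := by
  unfold hDist
  congr 2
  refine congrArg Finset.card ?_
  apply Finset.filter_congr
  intro a _
  simp [Equiv.Perm.mul_apply, (Equiv.injective ρ).ne_iff]

lemma hDist_mul_right (σ τ ρ : Equiv.Perm A) : hDist (σ * ρ) (τ * ρ) = hDist σ τ := by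
  unfold hDist
  congr 2
  apply Finset.card_bij' (fun a _ => ρ a) (fun a _ => ρ.symm a)
  · intro a ha
    simp only [Finset.mem_filter, Finset.mem_univ, true_and] at ha ⊢
    exact ha
  · intro a ha
    simp only [Finset.mem_filter, Finset.mem_univ, true_and] at ha ⊢
    simpa using ha
  · intro a _; simp
  · intro a _; simp

lemma hDist_one_mul_le (σ τ : Equiv.Perm A) : hDist 1 (σ * τ) ≤ hDist 1 σ + hDist 1 τ := by
  have := hDist_triangle (1 : Equiv.Perm A) σ (σ * τ)
  have h2 : hDist σ (σ * τ) = hDist 1 τ := by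
    conv_lhs => rw [show σ = σ * 1 by rw [mul_one]]
    exact hDist_mul_left σ 1 τ
  linarith

noncomputable def fixCard (σ : Equiv.Perm A) : ℕ :=
  (Finset.univ.filter fun a => σ a = a).card

lemma fixCard_le (σ : Equiv.Perm A) : fixCard σ ≤ Fintype.card A := by
  classical
  exact le_trans (Finset.card_le_card (Finset.filter_subset _ _)) (le_of_eq (Finset.card_univ))

lemma hDist_one (σ : Equiv.Perm A) :
    hDist 1 σ = ((Fintype.card A : ℝ) - fixCard σ) / (Fintype.card A : ℝ) := by
  unfold hDist fixCard
  congr 1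
  have heq : (Finset.univ.filter fun a : A => (1 : Equiv.Perm A) a ≠ σ a)
      = Finset.univ.filter fun a : A => ¬ (σ a = a) := by
    apply Finset.filter_congr
    intro a _
    simp only [Equiv.Perm.one_apply]
    exact ⟨fun hx => fun hy => hx hy.symm, fun hx hy => hx hy.symm⟩
  rw [heq]
  have key : (Finset.univ.filter fun a : A => σ a = a).card
      + (Finset.univ.filter fun a : A => ¬ σ a = a).card = Fintype.card A := by
    rw [← Finset.card_univ]
    exact Finset.card_filter_add_card_filter_not _
  have : ((Finset.univ.filter fun a : A => ¬ σ a = a).card : ℝ)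
      = (Fintype.card A : ℝ) - (Finset.univ.filter fun a : A => σ a = a).card := by
    have := key
    push_cast [← this]
    ring
  rw [this]


noncomputable def powPerm (p : ℕ) {A : Type*} (σ : Equiv.Perm A) : Equiv.Perm (Fin p → A) :=
  Equiv.arrowCongr (Equiv.refl (Fin p)) σ

lemma powPerm_apply {p : ℕ} (σ : Equiv.Perm A) (v : Fin p → A) (i : Fin p) :
    powPerm p σ v i = σ (v i) := rfl

lemma powPerm_one (p : ℕ) : powPerm p (1 : Equiv.Perm A) = 1 := by
  ext v i
  rfl

lemma powPerm_mul (p : ℕ) (σ τ : Equiv.Perm A) :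
    powPerm p (σ * τ) = powPerm p σ * powPerm p τ := by
  ext v i
  rfl

lemma fixCard_powPerm (p : ℕ) (σ : Equiv.Perm A) :
    fixCard (powPerm p σ) = (fixCard σ) ^ p := by
  classical
  have heq : (Finset.univ.filter fun v : Fin p → A => powPerm p σ v = v)
      = Fintype.piFinset (fun _ : Fin p => Finset.univ.filter fun a : A => σ a = a) := by
    ext v
    simp only [Finset.mem_filter, Finset.mem_univ, true_and, Fintype.mem_piFinset,
      funext_iff]
    rfl
  have h2 : fixCard (powPerm p σ)
      = (Fintype.piFinset (fun _ : Fin p => Finset.univ.filter fun a : A => σ a = a)).card := by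
    unfold fixCard
    congr 1
    convert heq using 2
  rw [h2, Fintype.card_piFinset]
  simp [fixCard, Finset.prod_const]

lemma hDist_powPerm_le (p : ℕ) (hp : 0 < p) (hA : 0 < Fintype.card A) (σ τ : Equiv.Perm A) :
    hDist (powPerm p σ) (powPerm p τ) ≤ (p : ℝ) * hDist σ τ := by
  classical
  set n := Fintype.card A with hn
  set Dst := (Finset.univ.filter fun a : A => σ a ≠ τ a) with hDst
  set d := Dst.card with hd
  -- per-coordinate count
  have hcount : ∀ i : Fin p,
      (Finset.univ.filter fun v : Fin p → A => σ (v i) ≠ τ (v i)).card = d * n ^ (p - 1) := by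
    intro i
    have heq : (Finset.univ.filter fun v : Fin p → A => σ (v i) ≠ τ (v i))
        = Fintype.piFinset (fun j : Fin p => if j = i then Dst else Finset.univ) := by
      ext v
      simp only [Finset.mem_filter, Finset.mem_univ, true_and, Fintype.mem_piFinset]
      constructor
      · intro hv j
        by_cases hj : j = i
        · subst hj; simp [hDst, hv]
        · simp [hj]
      · intro hv
        have := hv i
        simpa [hDst] using this
    rw [heq, Fintype.card_piFinset]
    rw [← Finset.mul_prod_erase Finset.univ _ (Finset.mem_univ i)]
    simp only [if_pos rfl]
    have : ∀ j ∈ Finset.univ.erase i,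
        (if j = i then Dst else (Finset.univ : Finset A)).card = n := by
      intro j hj
      rw [if_neg (Finset.ne_of_mem_erase hj)]
      simp [hn]
    rw [Finset.prod_congr rfl this, Finset.prod_const, Finset.card_erase_of_mem (Finset.mem_univ i)]
    simp [hd]
  -- union bound
  have hsub : (Finset.univ.filter fun v : Fin p → A => powPerm p σ v ≠ powPerm p τ v)
      ⊆ Finset.univ.biUnion (fun i : Fin p =>
          Finset.univ.filter fun v : Fin p → A => σ (v i) ≠ τ (v i)) := by
    intro v hv
    simp only [Finset.mem_filter, Finset.mem_univ, true_and, Finset.mem_biUnion] at hv ⊢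
    rw [Function.ne_iff] at hv
    obtain ⟨i, hi⟩ := hv
    exact ⟨i, hi⟩
  have hcardle : (Finset.univ.filter fun v : Fin p → A =>
      powPerm p σ v ≠ powPerm p τ v).card ≤ p * (d * n ^ (p - 1)) := by
    calc (Finset.univ.filter fun v : Fin p → A => powPerm p σ v ≠ powPerm p τ v).card
        ≤ (Finset.univ.biUnion (fun i : Fin p =>
            Finset.univ.filter fun v : Fin p → A => σ (v i) ≠ τ (v i))).card :=
          Finset.card_le_card hsub
      _ ≤ ∑ i : Fin p, (Finset.univ.filter fun v : Fin p → A => σ (v i) ≠ τ (v i)).card :=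
          Finset.card_biUnion_le
      _ = p * (d * n ^ (p - 1)) := by
          rw [Finset.sum_congr rfl fun i _ => hcount i]
          simp [Finset.sum_const, mul_comm]
  have hcardfun : Fintype.card (Fin p → A) = n ^ p := by
    simp [Fintype.card_fun, hn]
  have hnpos : (0:ℝ) < (n:ℝ) := by exact_mod_cast hA
  have hnp : (n:ℝ) ^ p = (n:ℝ) ^ (p - 1) * n := by
    rw [← pow_succ, Nat.sub_add_cancel hp]
  have main : ((Finset.univ.filter fun v : Fin p → A =>
        powPerm p σ v ≠ powPerm p τ v).card : ℝ) / ((n : ℝ) ^ p)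
      ≤ (p : ℝ) * (((Finset.univ.filter fun a : A => σ a ≠ τ a).card : ℝ) / (n : ℝ)) := by
    rw [div_le_iff₀ (by positivity)]
    calc ((Finset.univ.filter fun v : Fin p → A => powPerm p σ v ≠ powPerm p τ v).card : ℝ)
        ≤ ((p * (d * n ^ (p - 1)) : ℕ) : ℝ) := by exact_mod_cast hcardle
      _ = (p : ℝ) * ((d : ℝ) * (n:ℝ) ^ (p - 1)) := by push_cast; ring
      _ = (p : ℝ) * (((Finset.univ.filter fun a : A => σ a ≠ τ a).card : ℝ) / (n : ℝ))
            * ((n:ℝ) ^ p) := by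
          rw [hnp, hd, hDst]
          field_simp
  unfold hDist
  rw [hcardfun]
  have hcast : ((n ^ p : ℕ) : ℝ) = (n : ℝ) ^ p := by push_cast; ring
  rw [hcast]
  convert main using 3
  · congr 1
    convert rfl using 2

lemma permCongr_one (e : A ≃ B) : e.permCongr (1 : Equiv.Perm A) = 1 := by
  ext b
  simp [Equiv.permCongr_apply]

lemma permCongr_mul (e : A ≃ B) (σ τ : Equiv.Perm A) :
    e.permCongr (σ * τ) = e.permCongr σ * e.permCongr τ := by
  ext b
  simp [Equiv.permCongr_apply, Equiv.Perm.mul_apply]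

lemma hDist_permCongr (e : A ≃ B) (σ τ : Equiv.Perm A) :
    hDist (e.permCongr σ) (e.permCongr τ) = hDist σ τ := by
  classical
  unfold hDist
  have hcards : Fintype.card B = Fintype.card A := (Fintype.card_congr e).symm
  rw [hcards]
  congr 1
  have himg : (Finset.univ.filter fun b : B => e.permCongr σ b ≠ e.permCongr τ b)
      = (Finset.univ.filter fun a : A => σ a ≠ τ a).image e := by
    ext b
    simp only [Finset.mem_filter, Finset.mem_univ, true_and, Finset.mem_image]
    simp only [Equiv.permCongr_apply]
    constructor
    · intro hb
      refine ⟨e.symm b, ?_, by simp⟩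
      intro hcon
      exact hb (by rw [hcon])
    · rintro ⟨a, ha, rfl⟩
      simp only [Equiv.symm_apply_apply]
      intro hcon
      exact ha (e.injective hcon)
  rw [himg, Finset.card_image_of_injective _ e.injective]


lemma hDist_one_ge (σ : Equiv.Perm A) (S : Finset A) (hS : ∀ s ∈ S, σ s ≠ s) :
    (S.card : ℝ) / (Fintype.card A : ℝ) ≤ hDist 1 σ := by
  unfold hDist
  rcases Nat.eq_zero_or_pos (Fintype.card A) with h0 | hpos
  · simp [h0]
  · apply (div_le_div_iff_of_pos_right (by exact_mod_cast hpos)).mpr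
    have hsub : S ⊆ Finset.univ.filter fun a => (1 : Equiv.Perm A) a ≠ σ a := by
      intro s hs
      simp only [Finset.mem_filter, Finset.mem_univ, true_and]
      simp only [Equiv.Perm.one_apply]
      exact (hS s hs).symm
    exact_mod_cast Finset.card_le_card hsub

lemma fixCard_le_of_le (σ : Equiv.Perm A) {c : ℝ} (hc : c ≤ hDist 1 σ) :
    (fixCard σ : ℝ) ≤ (1 - c) * (Fintype.card A : ℝ) := by
  rcases Nat.eq_zero_or_pos (Fintype.card A) with h0 | hpos
  · have : fixCard σ = 0 := Nat.le_zero.mp (h0 ▸ fixCard_le σ)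
    simp [this, h0]
  · have hpos' : (0:ℝ) < (Fintype.card A : ℝ) := by exact_mod_cast hpos
    rw [hDist_one] at hc
    have := (le_div_iff₀ hpos').mp hc
    nlinarith

lemma hDist_one_powPerm_ge (p : ℕ) (σ : Equiv.Perm A) (hA : 0 < Fintype.card A)
    {c ε : ℝ} (hc0 : 0 ≤ c) (hσ : c ≤ hDist 1 σ) (hpow : (1 - c) ^ p < ε) :
    1 - ε < hDist 1 (powPerm p σ) := by
  rw [hDist_one (powPerm p σ), fixCard_powPerm]
  have hcardfun : Fintype.card (Fin p → A) = (Fintype.card A) ^ p := by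
    simp [Fintype.card_fun]
  rw [hcardfun]
  set n := Fintype.card A with hn
  set f := fixCard σ with hf
  have hfle : (f : ℝ) ≤ (1 - c) * n := fixCard_le_of_le σ hσ
  have hnp : (0:ℝ) < (n:ℝ) ^ p := by
    have : (0:ℝ) < (n:ℝ) := by exact_mod_cast hA
    positivity
  have hcast1 : ((n ^ p : ℕ) : ℝ) = (n:ℝ) ^ p := by push_cast; ring
  have hcast2 : ((f ^ p : ℕ) : ℝ) = (f:ℝ) ^ p := by push_cast; ring
  rw [hcast1, hcast2, lt_div_iff₀ hnp]
  have hfp : (f:ℝ) ^ p ≤ ((1 - c) * n) ^ p := pow_le_pow_left₀ (Nat.cast_nonneg f) hfle p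
  have hmp : ((1 - c) * (n:ℝ)) ^ p = (1 - c) ^ p * (n:ℝ) ^ p := mul_pow _ _ _
  nlinarith [mul_lt_mul_of_pos_right hpow hnp]

end SoficAux

theorem stmt_14 {G : Type*} [Group G] [Countable G] (H : Subgroup G)
    (h : SoficAction (MulAction.toPermHom G (G ⧸ H))) :
    ∃ (N : Subgroup G) (hN : N.Normal), N ≤ H ∧
      @SoficGroup (G ⧸ N) (@QuotientGroup.Quotient.group G _ N hN) := by
  classical
  obtain ⟨e, he⟩ := exists_surjective_nat G
  set D : ℕ → Finset G := fun k =>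
    ((Finset.range k).image e) ∪ ((Finset.range k).image e)⁻¹ ∪ {1} with hD
  set B : ℕ → Finset G := fun k => D k * D k with hBdef
  set E : ℕ → Finset (G ⧸ H) := fun k =>
    insert (QuotientGroup.mk (1 : G)) ((B k).image fun g => QuotientGroup.mk (g⁻¹ : G)) with hE
  have hD1 : ∀ k, (1 : G) ∈ D k := by
    intro k
    simp [hD]
  have hDmem : ∀ g : G, ∃ K : ℕ, ∀ k ≥ K, g ∈ D k := by
    intro g
    obtain ⟨i, rfl⟩ := he g
    refine ⟨i + 1, fun k hk => ?_⟩
    apply Finset.mem_union_left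
    apply Finset.mem_union_left
    exact Finset.mem_image_of_mem e (Finset.mem_range.mpr (lt_of_lt_of_le (Nat.lt_succ_self i) hk))
  have hBofD : ∀ {g g' : G} {k : ℕ}, g ∈ D k → g' ∈ D k → g * g' ∈ B k :=
    fun hg hg' => Finset.mul_mem_mul hg hg'
  have hBsingle : ∀ {g : G} {k : ℕ}, g ∈ D k → g ∈ B k := by
    intro g k hg
    have := Finset.mul_mem_mul hg (hD1 k)
    simpa using this
  -- apply soficity of the action
  have hmain : ∀ k : ℕ, ∃ (n : ℕ) (φ : G → Equiv.Perm (Fin n)),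
      φ 1 = 1 ∧
      (∀ g ∈ B k, ∀ g' ∈ B k, hDist (φ (g * g')) (φ g * φ g') < ((k : ℝ) + 1)⁻¹) ∧
      IsOrbitApprox (MulAction.toPermHom G (G ⧸ H)) (B k) (E k) (((k : ℝ) + 1)⁻¹) φ :=
    fun k => h (B k) (E k) _ (by positivity)
  choose nn φ hφ1 hmul horb using hmain
  -- basic facts
  have heps_le_one : ∀ k : ℕ, ((k : ℝ) + 1)⁻¹ ≤ 1 := by
    intro k
    rw [inv_le_one_iff₀]
    right
    have : (0:ℝ) ≤ (k:ℝ) := Nat.cast_nonneg k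
    linarith
  have npos : ∀ k, 0 < nn k := by
    intro k
    obtain ⟨m, S, π, hS, -, -⟩ := horb k
    rcases Nat.eq_zero_or_pos (nn k) with h0 | hpos
    · exfalso
      have hz : ((nn k : ℕ) : ℝ) = 0 := by exact_mod_cast h0
      have hz2 : (1 - ((k : ℝ) + 1)⁻¹) * ((nn k : ℕ) : ℝ) = 0 := by rw [hz, mul_zero]
      have h1 : ((S.card : ℝ)) > 0 := by linarith [hS]
      have h3 : 0 < S.card := by exact_mod_cast h1
      obtain ⟨s, -⟩ := Finset.card_pos.mp h3
      have := s.isLt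
      omega
    · exact hpos
  -- separation estimate for elements outside H
  have hsep : ∀ g : G, g ∉ H → ∀ k, g ∈ B k → 1 - ((k : ℝ) + 1)⁻¹ < hDist 1 (φ k g) := by
    intro g hg k hgB
    obtain ⟨m, S, π, hS, hinj, hcomp⟩ := horb k
    have hx0 : (QuotientGroup.mk (1 : G) : G ⧸ H) ∈ E k := by
      rw [hE]; exact Finset.mem_insert_self _ _
    have hgx : (QuotientGroup.mk (g⁻¹ : G) : G ⧸ H) ∈ E k := by
      rw [hE]; exact Finset.mem_insert_of_mem (Finset.mem_image_of_mem _ hgB)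
    have hEq : (MulAction.toPermHom G (G ⧸ H)) g⁻¹ (QuotientGroup.mk (1 : G))
        = (QuotientGroup.mk (g⁻¹ : G) : G ⧸ H) := by
      show g⁻¹ • (QuotientGroup.mk (1 : G) : G ⧸ H) = _
      rw [MulAction.Quotient.smul_mk]
      rw [smul_eq_mul, mul_one]
    have hmoves : ∀ s ∈ S, φ k g s ≠ s := by
      intro s hs hfix
      have hc := hcomp s hs g hgB (QuotientGroup.mk (1 : G)) hx0
        (by rw [hfix]; exact hs) (by rw [hEq]; exact hgx)
      rw [hfix] at hc
      have hxy := hinj s hs (Finset.mem_coe.mpr hx0)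
        (by rw [hEq]; exact Finset.mem_coe.mpr hgx) hc
      rw [hEq] at hxy
      have : (g⁻¹ : G) ∈ H := by
        have := (QuotientGroup.eq (s := H)).mp hxy.symm
        simpa using this
      exact hg (by simpa using (inv_mem this))
    have hge := SoficAux.hDist_one_ge (φ k g) S hmoves
    have hnpos : (0:ℝ) < (Fintype.card (Fin (nn k)) : ℝ) := by
      have := npos k
      simp only [Fintype.card_fin]
      exact_mod_cast this
    have hlt : 1 - ((k : ℝ) + 1)⁻¹ < (S.card : ℝ) / (Fintype.card (Fin (nn k)) : ℝ) := by
      rw [lt_div_iff₀ hnpos]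
      simpa [Fintype.card_fin] using hS
    linarith
  -- the ultrafilter
  set U : Ultrafilter ℕ := Filter.hyperfilter ℕ with hU
  have hUc : ∀ {P : ℕ → Prop}, (∀ᶠ k in Filter.atTop, P k) → (∀ᶠ k in (U : Filter ℕ), P k) := by
    intro P hP
    rw [← Nat.cofinite_eq_atTop] at hP
    exact hP.filter_mono (Filter.hyperfilter_le_cofinite)
  have heps_ev : ∀ c : ℝ, 0 < c → ∀ᶠ k : ℕ in Filter.atTop, ((k : ℝ) + 1)⁻¹ < c := by
    intro c hc
    obtain ⟨K, hK⟩ := exists_nat_gt c⁻¹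
    filter_upwards [Filter.eventually_ge_atTop K] with k hk
    have h1 : c⁻¹ < (k:ℝ) + 1 := by
      have : (K:ℝ) ≤ (k:ℝ) := by exact_mod_cast hk
      linarith
    have h2 : (0:ℝ) < (k:ℝ) + 1 := by positivity
    exact (inv_lt_comm₀ h2 hc).mpr h1
  have hmulU : ∀ g g' : G, ∀ c : ℝ, 0 < c →
      ∀ᶠ k in (U : Filter ℕ), hDist (φ k (g * g')) (φ k g * φ k g') < c := by
    intro g g' c hc
    apply hUc
    obtain ⟨K1, h1⟩ := hDmem g
    obtain ⟨K2, h2⟩ := hDmem g'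
    filter_upwards [Filter.eventually_ge_atTop K1, Filter.eventually_ge_atTop K2,
      heps_ev c hc] with k hk1 hk2 hk3
    exact lt_trans (hmul k g (hBsingle (h1 k hk1)) g' (hBsingle (h2 k hk2))) hk3
  -- the normal subgroup
  set Ncar : Set G :=
    {g | ∀ c : ℝ, 0 < c → ∀ᶠ k in (U : Filter ℕ), hDist 1 (φ k g) < c} with hNcar
  have hone : (1 : G) ∈ Ncar := by
    intro c hc
    apply Filter.Eventually.of_forall
    intro k
    rw [hφ1 k, SoficAux.hDist_self]
    exact hc
  have hmulmem : ∀ {g g' : G}, g ∈ Ncar → g' ∈ Ncar → g * g' ∈ Ncar := by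
    intro g g' hgN hg'N c hc
    have h3 := hmulU g g' (c/3) (by linarith)
    filter_upwards [hgN (c/3) (by linarith), hg'N (c/3) (by linarith), h3] with k k1 k2 k3
    have t1 := SoficAux.hDist_triangle (1 : Equiv.Perm (Fin (nn k)))
      (φ k g * φ k g') (φ k (g * g'))
    have t2 := SoficAux.hDist_one_mul_le (φ k g) (φ k g')
    have t3 : hDist (φ k g * φ k g') (φ k (g * g')) = hDist (φ k (g * g')) (φ k g * φ k g') :=
      SoficAux.hDist_comm _ _
    linarith
  have hinvmem : ∀ {g : G}, g ∈ Ncar → g⁻¹ ∈ Ncar := by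
    intro g hgN c hc
    filter_upwards [hgN (c/2) (by linarith), hmulU g g⁻¹ (c/2) (by linarith)] with k k1 k2
    have e1 : hDist 1 (φ k g⁻¹) = hDist (φ k g) (φ k g * φ k g⁻¹) := by
      have := SoficAux.hDist_mul_left (φ k g) 1 (φ k g⁻¹)
      rw [mul_one] at this
      exact this.symm
    have e2 : φ k (g * g⁻¹) = 1 := by rw [mul_inv_cancel]; exact hφ1 k
    rw [e2] at k2
    have t1 := SoficAux.hDist_triangle (φ k g) (1 : Equiv.Perm (Fin (nn k))) (φ k g * φ k g⁻¹)
    have t2 : hDist (φ k g) (1 : Equiv.Perm (Fin (nn k))) = hDist 1 (φ k g) :=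
      SoficAux.hDist_comm _ _
    linarith
  have hconjmem : ∀ g ∈ Ncar, ∀ g' : G, g' * g * g'⁻¹ ∈ Ncar := by
    intro g hgN g' c hc
    filter_upwards [hgN (c/4) (by linarith), hmulU (g' * g) g'⁻¹ (c/4) (by linarith),
      hmulU g' g (c/4) (by linarith), hmulU g' g'⁻¹ (c/4) (by linarith)] with k k1 k2 k3 k4
    have e2 : φ k (g' * g'⁻¹) = 1 := by rw [mul_inv_cancel]; exact hφ1 k
    rw [e2] at k4
    -- dist(1, φ(g'gg'⁻¹)) ≤ dist(1, φg' φg φg'⁻¹) + dist(φg'φgφg'⁻¹, φ(g'g) φg'⁻¹) + k2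
    have t1 := SoficAux.hDist_triangle (1 : Equiv.Perm (Fin (nn k)))
      (φ k g' * φ k g * φ k g'⁻¹) (φ k (g' * g * g'⁻¹))
    have t2 := SoficAux.hDist_triangle (φ k g' * φ k g * φ k g'⁻¹)
      (φ k (g' * g) * φ k g'⁻¹) (φ k (g' * g * g'⁻¹))
    have t3 : hDist (φ k g' * φ k g * φ k g'⁻¹) (φ k (g' * g) * φ k g'⁻¹)
        = hDist (φ k (g' * g)) (φ k g' * φ k g) := by
      rw [SoficAux.hDist_mul_right]
      exact SoficAux.hDist_comm _ _
    have t4 : hDist (φ k (g' * g) * φ k g'⁻¹) (φ k (g' * g * g'⁻¹))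
        = hDist (φ k ((g' * g) * g'⁻¹)) (φ k (g' * g) * φ k g'⁻¹) := by
      rw [mul_assoc]
      exact SoficAux.hDist_comm _ _
    have t5 := SoficAux.hDist_triangle (1 : Equiv.Perm (Fin (nn k)))
      (φ k g' * φ k g'⁻¹) (φ k g' * φ k g * φ k g'⁻¹)
    have t6 : hDist (φ k g' * φ k g'⁻¹) (φ k g' * φ k g * φ k g'⁻¹)
        = hDist 1 (φ k g) := by
      have : φ k g' * φ k g'⁻¹ = φ k g' * 1 * φ k g'⁻¹ := by rw [mul_one]
      rw [this, SoficAux.hDist_mul_right, SoficAux.hDist_mul_left]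
    have hrw : φ k ((g' * g) * g'⁻¹) = φ k (g' * g * g'⁻¹) := by rw [mul_assoc]
    rw [hrw] at t4
    linarith
  set N : Subgroup G :=
    { carrier := Ncar
      one_mem' := hone
      mul_mem' := fun hx hy => hmulmem hx hy
      inv_mem' := fun hx => hinvmem hx } with hN
  have hNnormal : N.Normal := by
    constructor
    intro g hg g'
    exact hconjmem g hg g'
  have hNmem : ∀ g : G, g ∈ N ↔ g ∈ Ncar := fun g => Iff.rfl
  have hNleH : N ≤ H := by
    intro g hgN
    by_contra hgH
    have h1 := hgN (1/2) (by norm_num)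
    have h2 : ∀ᶠ k in (U : Filter ℕ), (1:ℝ)/2 ≤ hDist 1 (φ k g) := by
      apply hUc
      obtain ⟨K, hK⟩ := hDmem g
      filter_upwards [Filter.eventually_ge_atTop K, Filter.eventually_ge_atTop 1] with k hk hk1
      have hs := hsep g hgH k (hBsingle (hK k hk))
      have hek : ((k : ℝ) + 1)⁻¹ ≤ 1/2 := by
        rw [inv_le_comm₀ (by positivity) (by norm_num)]
        have : (1:ℝ) ≤ (k:ℝ) := by exact_mod_cast hk1
        linarith
      linarith
    obtain ⟨k, hk1, hk2⟩ := (h1.and h2).exists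
    linarith
  refine ⟨N, hNnormal, hNleH, ?_⟩
  -- now prove soficity of G ⧸ N
  intro Fbar ε hε
  set σm : G ⧸ N → G := fun q => if q = 1 then 1 else Quotient.out q with hσm
  have hσ_spec : ∀ q : G ⧸ N, (QuotientGroup.mk (σm q) : G ⧸ N) = q := by
    intro q
    by_cases h1 : q = 1
    · subst h1
      simp [hσm]
    · rw [hσm]
      simp only [if_neg h1]
      exact QuotientGroup.out_eq' q
  have hσ1 : σm 1 = 1 := by simp [hσm]
  -- nontrivial elements have positive distance bounds
  have hstep : ∀ q : G ⧸ N, ∃ c : ℝ, 0 < c ∧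
      (q ≠ 1 → ∀ᶠ k in (U : Filter ℕ), c ≤ hDist 1 (φ k (σm q))) := by
    intro q
    by_cases h1 : q = 1
    · exact ⟨1, one_pos, fun hcon => absurd h1 hcon⟩
    · have hnotin : σm q ∉ Ncar := by
        intro hcon
        have : (QuotientGroup.mk (σm q) : G ⧸ N) = 1 := (QuotientGroup.eq_one_iff _).mpr hcon
        rw [hσ_spec q] at this
        exact h1 this
      simp only [hNcar, Set.mem_setOf_eq] at hnotin
      push_neg at hnotin
      obtain ⟨c, hc, hev⟩ := hnotin
      refine ⟨c, hc, fun _ => ?_⟩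
      have h2 : ∀ᶠ k in (U : Filter ℕ), ¬ hDist 1 (φ k (σm q)) < c := by
        filter_upwards [hev] with k hk; exact not_lt.mpr hk
      filter_upwards [h2] with k hk
      exact not_lt.mp hk
  choose cf hcfpos hcfev using hstep
  -- choose amplification exponent
  have hstep2 : ∀ q : G ⧸ N, ∃ p : ℕ, ((1:ℝ) - min (cf q) (1/2)) ^ p < ε := by
    intro q
    apply exists_pow_lt_of_lt_one hε
    have := hcfpos q
    have hmin : 0 < min (cf q) (1/2) := lt_min this (by norm_num)
    linarith
  choose pf hpf using hstep2
  set P : ℕ := (Fbar.sup pf) + 1 with hP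
  have hP1 : 0 < P := Nat.succ_pos _
  have hPge : ∀ q ∈ Fbar, pf q ≤ P := fun q hq => le_trans (Finset.le_sup hq) (Nat.le_succ _)
  have hPpos : (0:ℝ) < (P:ℝ) := by exact_mod_cast hP1
  -- eventual multiplicativity modulo N
  have hmulev : ∀ᶠ k in (U : Filter ℕ), ∀ q1 ∈ Fbar, ∀ q2 ∈ Fbar,
      hDist (φ k (σm (q1 * q2))) (φ k (σm q1) * φ k (σm q2)) < ε / P := by
    rw [Filter.eventually_all_finset]
    intro q1 hq1
    rw [Filter.eventually_all_finset]
    intro q2 hq2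
    set a : G := σm q1 * σm q2 with ha
    set n0 : G := a⁻¹ * σm (q1 * q2) with hn0
    have hn0N : n0 ∈ Ncar := by
      have hmk : (QuotientGroup.mk n0 : G ⧸ N) = 1 := by
        rw [hn0, ha]
        rw [QuotientGroup.mk_mul, QuotientGroup.mk_inv, QuotientGroup.mk_mul]
        rw [hσ_spec, hσ_spec, hσ_spec]
        group
      exact (QuotientGroup.eq_one_iff _).mp hmk
    have hb : σm (q1 * q2) = a * n0 := by rw [hn0]; group
    have hεP : 0 < ε / P / 3 := by positivity
    filter_upwards [hmulU a n0 (ε / P / 3) hεP, hn0N (ε / P / 3) hεP,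
      hmulU (σm q1) (σm q2) (ε / P / 3) hεP] with k k1 k2 k3
    have t1 := SoficAux.hDist_triangle (φ k (σm (q1 * q2))) (φ k a * φ k n0)
      (φ k (σm q1) * φ k (σm q2))
    have t2 := SoficAux.hDist_triangle (φ k a * φ k n0) (φ k a)
      (φ k (σm q1) * φ k (σm q2))
    have e1 : hDist (φ k (σm (q1 * q2))) (φ k a * φ k n0)
        = hDist (φ k (a * n0)) (φ k a * φ k n0) := by rw [← hb]
    have e2 : hDist (φ k a * φ k n0) (φ k a) = hDist 1 (φ k n0) := by
      have h' := SoficAux.hDist_mul_left (φ k a) 1 (φ k n0)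
      rw [mul_one] at h'
      rw [SoficAux.hDist_comm, h']
    have e3 : hDist (φ k a) (φ k (σm q1) * φ k (σm q2))
        = hDist (φ k (σm q1 * σm q2)) (φ k (σm q1) * φ k (σm q2)) := by rw [ha]
    rw [e1] at t1
    rw [e2] at t2
    rw [e3] at t2
    have : ε / P / 3 + (ε / P / 3 + ε / P / 3) = ε / P := by ring
    linarith
  -- eventual separation
  have hsepev : ∀ᶠ k in (U : Filter ℕ), ∀ q ∈ Fbar, q ≠ 1 →
      cf q ≤ hDist 1 (φ k (σm q)) := by
    rw [Filter.eventually_all_finset]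
    intro q hq
    by_cases h1 : q = 1
    · exact Filter.Eventually.of_forall fun k hcon => absurd h1 hcon
    · have := hcfev q h1
      filter_upwards [this] with k hk _
      exact hk
  obtain ⟨k, hkSep, hkMul⟩ := (hsepev.and hmulev).exists
  have hnk : 0 < nn k := npos k
  have hcardA : 0 < Fintype.card (Fin (nn k)) := by simpa using hnk
  have hcard : Fintype.card (Fin P → Fin (nn k)) = (nn k) ^ P := by
    simp [Fintype.card_fun]
  set e2 : (Fin P → Fin (nn k)) ≃ Fin ((nn k) ^ P) :=
    Fintype.equivFinOfCardEq hcard with he2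
  set Θ : Equiv.Perm (Fin (nn k)) → Equiv.Perm (Fin ((nn k) ^ P)) :=
    fun x => e2.permCongr (SoficAux.powPerm P x) with hΘ
  have hΘ1 : Θ 1 = 1 := by
    rw [hΘ]
    simp only [SoficAux.powPerm_one]
    exact SoficAux.permCongr_one e2
  have hΘmul : ∀ x y, Θ (x * y) = Θ x * Θ y := by
    intro x y
    rw [hΘ]
    simp only [SoficAux.powPerm_mul]
    exact SoficAux.permCongr_mul e2 _ _
  have hΘdist : ∀ x y, hDist (Θ x) (Θ y) = hDist (SoficAux.powPerm P x) (SoficAux.powPerm P y) :=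
    fun x y => SoficAux.hDist_permCongr e2 _ _
  refine ⟨(nn k) ^ P, fun q => Θ (φ k (σm q)), ?_, ?_, ?_⟩
  · show Θ (φ k (σm 1)) = 1
    rw [hσ1, hφ1 k, hΘ1]
  · intro q1 hq1 q2 hq2
    rw [← hΘmul]
    rw [hΘdist]
    have hle := SoficAux.hDist_powPerm_le P hP1 hcardA (φ k (σm (q1 * q2)))
      (φ k (σm q1) * φ k (σm q2))
    have hk2 := hkMul q1 hq1 q2 hq2
    calc hDist (SoficAux.powPerm P (φ k (σm (q1 * q2))))
          (SoficAux.powPerm P (φ k (σm q1) * φ k (σm q2)))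
        ≤ (P:ℝ) * hDist (φ k (σm (q1 * q2))) (φ k (σm q1) * φ k (σm q2)) := hle
      _ < (P:ℝ) * (ε / P) := by
          apply mul_lt_mul_of_pos_left hk2 hPpos
      _ = ε := by field_simp
  · intro q hq hq1
    have hcq := hkSep q hq hq1
    have hcq' : min (cf q) (1/2) ≤ hDist 1 (φ k (σm q)) :=
      le_trans (min_le_left _ _) hcq
    have hmin0 : (0:ℝ) ≤ min (cf q) (1/2) :=
      le_min (le_of_lt (hcfpos q)) (by norm_num)
    have hppow : ((1:ℝ) - min (cf q) (1/2)) ^ P ≤ ((1:ℝ) - min (cf q) (1/2)) ^ (pf q) := by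
      apply pow_le_pow_of_le_one
      · have : min (cf q) (1/2) ≤ 1/2 := min_le_right _ _
        linarith
      · linarith [hmin0]
      · exact hPge q hq
    have hpow : ((1:ℝ) - min (cf q) (1/2)) ^ P < ε := lt_of_le_of_lt hppow (hpf q)
    have hsep2 := SoficAux.hDist_one_powPerm_ge P (φ k (σm q)) hcardA hmin0 hcq' hpow
    have : hDist 1 (Θ (φ k (σm q)))
        = hDist 1 (SoficAux.powPerm P (φ k (σm q))) := by
      calc hDist 1 (Θ (φ k (σm q))) = hDist (Θ 1) (Θ (φ k (σm q))) := by rw [hΘ1]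
        _ = hDist (SoficAux.powPerm P 1) (SoficAux.powPerm P (φ k (σm q))) :=
            hΘdist 1 (φ k (σm q))
        _ = hDist 1 (SoficAux.powPerm P (φ k (σm q))) := by rw [SoficAux.powPerm_one]
    rw [this]
    exact hsep2
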